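/- Let w = (1 − √11)/2 (√11 the positive real square root of 11). Then the set of irreducible λ-quiddities over ⟨w⟩ is exactly {(0, kw, 0, −kw) : k ∈ ℤ} ∪ {(kw, 0, −kw, 0) : k ∈ ℤ}. -/

import Mathlib

open Matrix Polynomial

noncomputable section

/-- The elementary matrix [[a, -1], [1, 0]]. -/
def matE (a : ℂ) : Matrix (Fin 2) (Fin 2) ℂ := !![a, -1; 1, 0]

/-- M_n(a_1, …, a_n) = matE a_n * matE a_{n-1} * ⋯ * matE a_1, for the list [a_1, …, a_n]. -/
def Mlist (l : List ℂ) : Matrix (Fin 2) (Fin 2) ℂ := (l.reverse.map matE).prod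

/-- A λ-quiddity over R : a nonempty tuple of elements of R with M_n(a_1,…,a_n) = ±Id. -/
def IsQuiddity (R : Set ℂ) (l : List ℂ) : Prop :=
  l ≠ [] ∧ (∀ x ∈ l, x ∈ R) ∧ (Mlist l = 1 ∨ Mlist l = -1)

/-- (a_1,…,a_n) ⊕ (b_1,…,b_m) := (a_1+b_m, a_2,…,a_{n-1}, a_n+b_1, b_2,…,b_{m-1}). -/
def oplus (a b : List ℂ) : List ℂ :=
  (a.headI + b.getLastD 0) ::
    (a.tail.dropLast ++ (a.getLastD 0 + b.headI) :: b.tail.dropLast)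

/-- b is obtained from a by a cyclic permutation of a or of the reversal of a. -/
def CyclicEquiv (a b : List ℂ) : Prop :=
  (∃ k, b = a.rotate k) ∨ (∃ k, b = a.reverse.rotate k)

/-- A λ-quiddity c over R is reducible if c ∼ (a_1,…,a_m) ⊕ (b_1,…,b_l) with
(a_1,…,a_m) a tuple of elements of R, (b_1,…,b_l) a λ-quiddity over R, m ≥ 3 and l ≥ 3. -/
def ReducibleQuiddity (R : Set ℂ) (c : List ℂ) : Prop :=
  ∃ a b : List ℂ, (∀ x ∈ a, x ∈ R) ∧ IsQuiddity R b ∧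
    3 ≤ a.length ∧ 3 ≤ b.length ∧ CyclicEquiv c (oplus a b)

/-- The irreducible λ-quiddities over R : the λ-quiddities of size ≥ 3 which are not
reducible (those of size < 3, i.e. (0,0), are by convention not irreducible). -/
def IrreducibleQuiddity (R : Set ℂ) (c : List ℂ) : Prop :=
  IsQuiddity R c ∧ 3 ≤ c.length ∧ ¬ ReducibleQuiddity R c

/-- The subgroup ⟨w⟩ = {kw : k ∈ ℤ} of (ℂ, +), as a set. -/
def subgroupGen (w : ℂ) : Set ℂ := {x | ∃ k : ℤ, x = (k : ℂ) * w}

end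

noncomputable section Aux
variable {S : Type*} [CommRing S]
def matS (a : S) : Matrix (Fin 2) (Fin 2) S := !![a, -1; 1, 0]
def matSi (a : S) : Matrix (Fin 2) (Fin 2) S := !![0, 1; -1, a]
def MlS (l : List S) : Matrix (Fin 2) (Fin 2) S := (l.reverse.map matS).prod
@[simp] lemma MlS_nil : MlS ([] : List S) = 1 := rfl
lemma Mlist_eq_MlS (l : List ℂ) : Mlist l = MlS l := rfl

lemma triple_id (x y : S) : matS y * matS 0 * matS x = -(matS (x + y)) := by
  ext i j
  fin_cases i <;> fin_cases j <;>
    simp [matS, Matrix.mul_apply, Fin.sum_univ_two]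
  ring

lemma MlS_cons (a : S) (l : List S) : MlS (a :: l) = MlS l * matS a := by
  simp [MlS, List.map_append]
lemma MlS_concat (a : S) (l : List S) : MlS (l ++ [a]) = matS a * MlS l := by
  simp [MlS, List.map_append]
lemma matS_mul_matSi (a : S) : matS a * matSi a = 1 := by
  simp [matS, matSi, Matrix.mul_fin_two, Matrix.one_fin_two]
lemma matSi_mul_matS (a : S) : matSi a * matS a = 1 := by
  simp [matS, matSi, Matrix.mul_fin_two, Matrix.one_fin_two]

lemma MlS_rotate_pm {l : List S} (h : MlS l = 1 ∨ MlS l = -1) (k : ℕ) :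
    MlS (l.rotate k) = 1 ∨ MlS (l.rotate k) = -1 := by
  induction k generalizing l with
  | zero => simpa using h
  | succ n ih =>
    cases l with
    | nil => simpa using h
    | cons a t =>
      rw [List.rotate_cons_succ]
      apply ih
      rw [MlS_cons] at h
      rw [MlS_concat]
      rcases h with h | h
      · have e : MlS t = matSi a := by
          have := congrArg (· * matSi a) h
          simpa [mul_assoc, matS_mul_matSi] using this
        rw [e, matS_mul_matSi]; left; rfl
      · have e : MlS t = -matSi a := by
          have := congrArg (· * matSi a) h
          simpa [mul_assoc, matS_mul_matSi] using this
        rw [e]; right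
        simp [matS_mul_matSi]

lemma cont_aux (l : List ℝ) (h : ∀ a ∈ l, 2 < |a|) :
    1 ≤ |(l.map matS).prod 0 0| ∧ |(l.map matS).prod 1 0| < |(l.map matS).prod 0 0| := by
  induction l with
  | nil => norm_num
  | cons a t ih =>
    obtain ⟨h1, h2⟩ := ih (fun x hx => h x (List.mem_cons_of_mem a hx))
    have ha : 2 < |a| := h a (List.mem_cons_self)
    set P := (t.map matS).prod with hP
    have e0 : ((a :: t).map matS).prod 0 0 = a * P 0 0 - P 1 0 := by
      simp [matS, Matrix.mul_apply, Fin.sum_univ_two, hP]; ring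
    have e1 : ((a :: t).map matS).prod 1 0 = P 0 0 := by
      simp [matS, Matrix.mul_apply, Fin.sum_univ_two, hP]
    rw [e0, e1]
    have key : |P 0 0| < |a * P 0 0 - P 1 0| := by
      have b1 : |a * P 0 0| - |P 1 0| ≤ |a * P 0 0 - P 1 0| := abs_sub_abs_le_abs_sub _ _
      rw [abs_mul] at b1
      nlinarith [abs_nonneg (P 1 0), abs_nonneg (P 0 0)]
    exact ⟨le_of_lt (lt_of_le_of_lt h1 key), key⟩

lemma MlS_ne_pm_of_big {l : List ℝ} (hne : l ≠ []) (h : ∀ a ∈ l, 2 < |a|) :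
    ¬ (MlS l = 1 ∨ MlS l = -1) := by
  intro hpm
  have hrev : l.reverse ≠ [] := by simpa using hne
  obtain ⟨a, t, ht⟩ := List.exists_cons_of_ne_nil hrev
  have hmem : ∀ x ∈ t, 2 < |x| := by
    intro x hx
    apply h
    rw [← List.mem_reverse, ht]
    exact List.mem_cons_of_mem a hx
  obtain ⟨h1, _⟩ := cont_aux t hmem
  have e1 : MlS l 1 0 = (t.map matS).prod 0 0 := by
    rw [MlS, ht]
    simp [matS, Matrix.mul_apply, Fin.sum_univ_two]
  have : MlS l 1 0 ≠ 0 := by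
    rw [e1]; intro h0; rw [h0] at h1; simp at h1; linarith
  rcases hpm with hpm | hpm <;> rw [hpm] at this <;> simp at this

lemma sqrt11_irr : Irrational (Real.sqrt 11) :=
  (by norm_num : Nat.Prime 11).irrational_sqrt

lemma q11 : Irreducible (X ^ 2 - C (11 : ℚ)) := by
  apply X_pow_sub_C_irreducible_of_prime Nat.prime_two
  intro b hb
  have hb' : (b : ℝ) ^ 2 = 11 := by
    have := congrArg (fun q : ℚ => (q : ℝ)) hb
    push_cast at this
    simpa using this
  have : Real.sqrt 11 = |(b : ℝ)| := by
    rw [← hb', Real.sqrt_sq_eq_abs]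
  apply sqrt11_irr
  rw [this, ← Rat.cast_abs]
  exact ⟨|b|, rfl⟩

instance fact11 : Fact (Irreducible (X ^ 2 - C (11 : ℚ))) := ⟨q11⟩

abbrev A11 : Type := AdjoinRoot (X ^ 2 - C (11 : ℚ))

def ωA : A11 := (1 - AdjoinRoot.root _) / 2

def phiP : A11 →+* ℂ :=
  AdjoinRoot.lift (algebraMap ℚ ℂ) ((Real.sqrt 11 : ℝ) : ℂ) (by
    simp only [eval₂_sub, eval₂_pow, eval₂_X, eval₂_C]
    rw [← Complex.ofReal_pow, Real.sq_sqrt (by norm_num : (0:ℝ) ≤ 11)]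
    norm_num)

def phiM : A11 →+* ℝ :=
  AdjoinRoot.lift (algebraMap ℚ ℝ) (-(Real.sqrt 11)) (by
    simp only [eval₂_sub, eval₂_pow, eval₂_X, eval₂_C]
    rw [neg_pow, Real.sq_sqrt (by norm_num : (0:ℝ) ≤ 11)]
    norm_num)

lemma phiP_root : phiP (AdjoinRoot.root (X ^ 2 - C (11:ℚ))) = ((Real.sqrt 11 : ℝ) : ℂ) := by
  unfold phiP; exact AdjoinRoot.lift_root _

lemma phiM_root : phiM (AdjoinRoot.root (X ^ 2 - C (11:ℚ))) = -(Real.sqrt 11) := by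
  unfold phiM; exact AdjoinRoot.lift_root _

lemma phiP_omega (w : ℂ) (hw : w = (((1 - Real.sqrt 11) / 2 : ℝ) : ℂ)) : phiP ωA = w := by
  rw [ωA, hw]
  rw [map_div₀, map_sub, _root_.map_one, phiP_root]
  push_cast
  push_cast [map_ofNat]
  norm_num

lemma phiM_omega : phiM ωA = (1 + Real.sqrt 11) / 2 := by
  rw [ωA]
  rw [map_div₀, map_sub, _root_.map_one, phiM_root]
  rw [map_ofNat]
  norm_num

lemma mapMatrix_matS {S T : Type*} [CommRing S] [CommRing T] (f : S →+* T) (a : S) :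
    f.mapMatrix (matS a) = matS (f a) := by
  ext i j
  fin_cases i <;> fin_cases j <;> simp [matS, RingHom.mapMatrix_apply]

lemma mapMatrix_MlS {S T : Type*} [CommRing S] [CommRing T] (f : S →+* T) (l : List S) :
    f.mapMatrix (MlS l) = MlS (l.map f) := by
  rw [MlS, MlS, map_list_prod, ← List.map_reverse, List.map_map, List.map_map]
  congr 1
  apply List.map_congr_left
  intro a _
  exact mapMatrix_matS f a

variable {w : ℂ}

lemma int_mul_w_rat (hw : w = (((1 - Real.sqrt 11) / 2 : ℝ) : ℂ)) {m : ℤ} {q : ℚ}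
    (h : (m : ℂ) * w = (q : ℂ)) : m = 0 ∧ (q : ℂ) = 0 := by
  have hR : (m : ℝ) * ((1 - Real.sqrt 11) / 2) = (q : ℝ) := by
    rw [hw] at h
    exact_mod_cast h
  have hm : m = 0 := by
    by_contra hm
    apply sqrt11_irr
    refine ⟨1 - 2 * q / m, ?_⟩
    have hm' : (m : ℝ) ≠ 0 := Int.cast_ne_zero.mpr hm
    push_cast
    field_simp at hR ⊢
    linarith
  refine ⟨hm, ?_⟩
  rw [hm] at h
  push_cast at h
  simpa using h.symm

lemma int_mul_w_ne_one (hw : w = (((1 - Real.sqrt 11) / 2 : ℝ) : ℂ)) (k : ℤ) :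
    (k : ℂ) * w ≠ 1 ∧ (k : ℂ) * w ≠ -1 := by
  constructor
  · intro h
    have := int_mul_w_rat hw (q := 1) (by push_cast; exact h)
    norm_num at this
  · intro h
    have := int_mul_w_rat hw (q := -1) (by push_cast; exact h)
    norm_num at this

lemma w_sq (hw : w = (((1 - Real.sqrt 11) / 2 : ℝ) : ℂ)) : w ^ 2 = w + 5 / 2 := by
  have hs : Real.sqrt 11 ^ 2 = 11 := Real.sq_sqrt (by norm_num)
  have hR : ((1 - Real.sqrt 11) / 2) ^ 2 = (1 - Real.sqrt 11) / 2 + 5 / 2 := by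
    linear_combination hs / 4
  have hC := congrArg (fun r : ℝ => (r : ℂ)) hR
  push_cast at hC
  rw [hw]
  push_cast
  linear_combination hC

lemma prod_w_ne_two (hw : w = (((1 - Real.sqrt 11) / 2 : ℝ) : ℂ)) (k l : ℤ) :
    ((k : ℂ) * w) * ((l : ℂ) * w) ≠ 2 := by
  intro h
  have h2 : ((k * l : ℤ) : ℂ) * w = ((2 - 5 / 2 * (k * l : ℤ) : ℚ) : ℂ) := by
    have : ((k : ℂ) * (l : ℂ)) * (w + 5 / 2) = 2 := by
      rw [← w_sq hw]; ring_nf; ring_nf at h; linear_combination h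
    push_cast
    linear_combination this
  obtain ⟨hm, hq⟩ := int_mul_w_rat hw h2
  rw [hm] at hq
  norm_num at hq

lemma no_three (hw : w = (((1 - Real.sqrt 11) / 2 : ℝ) : ℂ)) {x y z : ℂ}
    (hy : ∃ k : ℤ, y = (k : ℂ) * w)
    (h : MlS [x, y, z] = 1 ∨ MlS [x, y, z] = -1) : False := by
  obtain ⟨k, rfl⟩ := hy
  have e : MlS [x, (k : ℂ) * w, z] 1 1 = -((k : ℂ) * w) := by
    simp [MlS, matS, Matrix.mul_apply, Fin.sum_univ_two]
  obtain ⟨h1, h2⟩ := int_mul_w_ne_one hw k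
  rcases h with h | h
  · rw [h, Matrix.one_apply_eq] at e
    exact h2 (by linear_combination e)
  · rw [h, Matrix.neg_apply, Matrix.one_apply_eq] at e
    exact h1 (by linear_combination e)

lemma MlS_four (a1 a2 a3 a4 : ℂ) :
    MlS [a1, a2, a3, a4] =
      !![a4 * (a3 * a2 * a1 - a3 - a1) - a2 * a1 + 1, a4 * (1 - a3 * a2) + a2;
         a3 * a2 * a1 - a3 - a1, 1 - a3 * a2] := by
  show (([a1,a2,a3,a4].reverse).map matS).prod = _
  simp only [List.reverse_cons, List.reverse_nil, List.nil_append, List.cons_append,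
    List.map_cons, List.map_nil, List.prod_cons, List.prod_nil, mul_one]
  simp only [matS, Matrix.mul_fin_two]
  ext i j
  fin_cases i <;> fin_cases j <;>
      simp only [Matrix.of_apply, Matrix.cons_val', Matrix.cons_val_zero, Matrix.cons_val_one,
        Matrix.head_cons, Matrix.head_fin_const, Matrix.empty_val', Matrix.cons_val_fin_one] <;>
    ring

lemma neg_one_fin_two : (-1 : Matrix (Fin 2) (Fin 2) ℂ) = !![-1, 0; 0, -1] := by
  ext i j
  fin_cases i <;> fin_cases j <;>
    simp [Matrix.neg_apply, Matrix.one_apply]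

lemma four_case (hw : w = (((1 - Real.sqrt 11) / 2 : ℝ) : ℂ)) {a1 a2 a3 a4 : ℂ}
    {k1 k2 k3 : ℤ} (e1 : a1 = (k1 : ℂ) * w) (e2 : a2 = (k2 : ℂ) * w) (e3 : a3 = (k3 : ℂ) * w)
    (h : MlS [a1, a2, a3, a4] = 1 ∨ MlS [a1, a2, a3, a4] = -1) :
    (a1 = 0 ∧ a3 = 0 ∧ a4 = -a2) ∨ (a2 = 0 ∧ a4 = 0 ∧ a3 = -a1) := by
  rw [MlS_four] at h
  rcases h with h | h
  · rw [Matrix.one_fin_two] at h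
    have E := Matrix.ext_iff.mpr h
    have E00 : a4 * (a3 * a2 * a1 - a3 - a1) - a2 * a1 + 1 = 1 := by simpa using E 0 0
    have E01 : a4 * (1 - a3 * a2) + a2 = 0 := by simpa using E 0 1
    have E10 : a3 * a2 * a1 - a3 - a1 = 0 := by simpa using E 1 0
    have E11 : (1 : ℂ) - a3 * a2 = 1 := by simpa using E 1 1
    have h32 : a3 * a2 = 0 := by linear_combination -E11
    have h21 : a2 * a1 = 0 := by linear_combination a4 * E10 - E00
    have h4 : a4 = -a2 := by linear_combination E01 + a4 * h32
    have h3 : a3 = -a1 := by linear_combination a1 * h32 - E10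
    rcases mul_eq_zero.mp h21 with h20 | h10
    · right
      exact ⟨h20, by rw [h4, h20, neg_zero], h3⟩
    · rcases mul_eq_zero.mp h32 with h30 | h20
      · left
        exact ⟨h10, h30, h4⟩
      · right
        exact ⟨h20, by rw [h4, h20, neg_zero], h3⟩
  · exfalso
    rw [neg_one_fin_two] at h
    have E := Matrix.ext_iff.mpr h
    have E00 : a4 * (a3 * a2 * a1 - a3 - a1) - a2 * a1 + 1 = -1 := by simpa using E 0 0
    have E10 : a3 * a2 * a1 - a3 - a1 = 0 := by simpa using E 1 0
    have h21 : a2 * a1 = 2 := by linear_combination a4 * E10 - E00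
    apply prod_w_ne_two hw k2 k1
    rw [← e1, ← e2]
    exact h21

lemma rotate_append {α : Type*} (u v : List α) : (u ++ v).rotate u.length = v ++ u := by
  rw [List.rotate_eq_drop_append_take (by simp)]
  simp

lemma no_nonzero_quiddity (w : ℂ) (hw : w = (((1 - Real.sqrt 11) / 2 : ℝ) : ℂ))
    {ks : List ℤ} (hne : ks ≠ []) (h0 : ∀ k ∈ ks, k ≠ 0)
    (h : MlS (ks.map fun k : ℤ => (k : ℂ) * w) = 1 ∨ MlS (ks.map fun k : ℤ => (k : ℂ) * w) = -1) :
    False := by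
  classical
  set lA : List A11 := ks.map (fun k : ℤ => (k : A11) * ωA) with hlA
  have hmap : ks.map (fun k : ℤ => (k : ℂ) * w) = lA.map phiP := by
    rw [hlA, List.map_map]
    apply List.map_congr_left
    intro k _
    simp only [Function.comp_apply, _root_.map_mul, map_intCast, phiP_omega w hw]
  have hinj : Function.Injective
      (fun M : Matrix (Fin 2) (Fin 2) A11 => (phiP.mapMatrix M : Matrix (Fin 2) (Fin 2) ℂ)) := by
    intro M N hMN
    apply Matrix.map_injective phiP.injective
    simpa [RingHom.mapMatrix_apply] using hMN
  have hA : MlS lA = 1 ∨ MlS lA = -1 := by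
    rcases h with h | h
    · left
      apply hinj
      simp only [mapMatrix_MlS, ← hmap, h, _root_.map_one]
    · right
      apply hinj
      simp only [mapMatrix_MlS, ← hmap, h, map_neg, _root_.map_one]
  have hB : MlS (lA.map phiM) = 1 ∨ MlS (lA.map phiM) = -1 := by
    rcases hA with hA | hA
    · left; rw [← mapMatrix_MlS, hA, _root_.map_one]
    · right; rw [← mapMatrix_MlS, hA, map_neg, _root_.map_one]
  have hform : lA.map phiM = ks.map (fun k : ℤ => (k : ℝ) * ((1 + Real.sqrt 11) / 2)) := by
    rw [hlA, List.map_map]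
    apply List.map_congr_left
    intro k _
    simp only [Function.comp_apply, _root_.map_mul, map_intCast, phiM_omega]
  rw [hform] at hB
  have hs3 : 3 < Real.sqrt 11 := by
    nlinarith [Real.sq_sqrt (show (0:ℝ) ≤ 11 by norm_num), Real.sqrt_nonneg 11]
  refine MlS_ne_pm_of_big (l := ks.map (fun k : ℤ => (k : ℝ) * ((1 + Real.sqrt 11) / 2)))
    (by simpa using hne) ?_ hB
  intro a ha
  obtain ⟨k, hk, rfl⟩ := List.mem_map.mp ha
  have hk0 : k ≠ 0 := h0 k hk
  have h1k : (1 : ℝ) ≤ |(k : ℝ)| := by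
    have := Int.one_le_abs hk0
    calc (1:ℝ) ≤ ((|k| : ℤ) : ℝ) := by exact_mod_cast this
      _ = |(k : ℝ)| := by push_cast; rfl
  rw [abs_mul]
  have hwb : |((1 + Real.sqrt 11) / 2 : ℝ)| = (1 + Real.sqrt 11) / 2 := by
    rw [abs_of_pos]; positivity
  rw [hwb]
  nlinarith

-- closure properties of subgroupGen
lemma sg_zero (w : ℂ) : (0 : ℂ) ∈ subgroupGen w := ⟨0, by simp⟩
lemma sg_neg (w : ℂ) {x : ℂ} (hx : x ∈ subgroupGen w) : -x ∈ subgroupGen w := by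
  obtain ⟨k, rfl⟩ := hx; exact ⟨-k, by push_cast; ring⟩
lemma sg_add (w : ℂ) {x y : ℂ} (hx : x ∈ subgroupGen w) (hy : y ∈ subgroupGen w) :
    x + y ∈ subgroupGen w := by
  obtain ⟨k, rfl⟩ := hx; obtain ⟨l, rfl⟩ := hy; exact ⟨k + l, by push_cast; ring⟩

lemma exists_int_list (w : ℂ) (c : List ℂ) (h : ∀ x ∈ c, x ∈ subgroupGen w) :
    ∃ ks : List ℤ, c = ks.map (fun k : ℤ => (k : ℂ) * w) := by
  induction c with
  | nil => exact ⟨[], rfl⟩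
  | cons a t ih =>
    obtain ⟨ks, hks⟩ := ih (fun x hx => h x (List.mem_cons_of_mem a hx))
    obtain ⟨k, hk⟩ := h a (List.mem_cons_self)
    exact ⟨k :: ks, by simp [hk, hks]⟩

lemma oplus_length (a b : List ℂ) (ha : 2 ≤ a.length) (hb : 2 ≤ b.length) :
    (oplus a b).length = a.length + b.length - 2 := by
  simp only [oplus, List.length_cons, List.length_append, List.length_dropLast,
    List.length_tail]
  omega

-- the reduction in the presence of a zero, for length ≥ 5
lemma zero_imp_reducible (w : ℂ) {c : List ℂ} (hc5 : 5 ≤ c.length)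
    (hmem : ∀ x ∈ c, x ∈ subgroupGen w) (hpm : Mlist c = 1 ∨ Mlist c = -1)
    (h0 : (0 : ℂ) ∈ c) : ReducibleQuiddity (subgroupGen w) c := by
  classical
  obtain ⟨s, t, hst⟩ := List.append_of_mem h0
  have hrot : c.rotate s.length = (0 : ℂ) :: (t ++ s) := by
    rw [hst, List.rotate_eq_drop_append_take (by simp)]
    simp
  -- split t ++ s = y :: (md ++ [lm, x])
  have hlen : c.length = s.length + t.length + 1 := by rw [hst]; simp; omega
  have hlen_e : (t ++ s).length = c.length - 1 := by simp; omega
  obtain ⟨y, e1, he1⟩ : ∃ y e1, t ++ s = y :: e1 := by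
    cases hts : (t ++ s) with
    | nil => exfalso; rw [hts] at hlen_e; simp at hlen_e; omega
    | cons y e1 => exact ⟨y, e1, rfl⟩
  have hlen_e1 : e1.length = c.length - 2 := by
    have := hlen_e; rw [he1] at this; simp at this; omega
  obtain ⟨x, u, h1⟩ : ∃ x u, e1.reverse = x :: u :=
    List.exists_cons_of_ne_nil (by
      rw [← List.length_pos_iff, List.length_reverse]
      omega)
  obtain ⟨lm, rr, h2⟩ : ∃ lm rr, u = lm :: rr :=
    List.exists_cons_of_ne_nil (by
      have : u.length = e1.length - 1 := by
        have := congrArg List.length h1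
        simp at this
        omega
      rw [← List.length_pos_iff]
      omega)
  have hrr : e1.reverse = x :: lm :: rr := by rw [h1, h2]
  have he1' : e1 = (rr.reverse ++ [lm]) ++ [x] := by
    have := congrArg List.reverse hrr
    simpa using this
  set md := rr.reverse with hmd
  set m : List ℂ := md ++ [lm] with hm
  have hmlen : m.length = c.length - 3 := by
    have := hlen_e1
    rw [he1'] at this
    simp at this ⊢
    omega
  have hd : c.rotate s.length = 0 :: y :: (m ++ [x]) := by
    rw [hrot, he1, he1']
  -- membership facts
  have hmem_rot : ∀ z ∈ (0 : ℂ) :: y :: (m ++ [x]), z ∈ subgroupGen w := by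
    intro z hz
    apply hmem
    rw [← List.mem_rotate (n := s.length), hd]
    exact hz
  have hx_mem : x ∈ subgroupGen w := hmem_rot x (by simp)
  have hy_mem : y ∈ subgroupGen w := hmem_rot y (by simp)
  have hm_mem : ∀ z ∈ m, z ∈ subgroupGen w := fun z hz => hmem_rot z (by simp [hz])
  -- the quiddity b
  set P := MlS m with hP
  have hrpm : MlS (c.rotate s.length) = 1 ∨ MlS (c.rotate s.length) = -1 :=
    MlS_rotate_pm (show MlS c = 1 ∨ MlS c = -1 from hpm) s.length
  rw [hd] at hrpm
  have hexp : MlS ((0 : ℂ) :: y :: (m ++ [x])) = matS x * P * matS y * matS 0 := by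
    rw [MlS_cons, MlS_cons, MlS_concat, hP]
  rw [hexp] at hrpm
  set b : List ℂ := (x + y) :: m with hb
  have hbq : MlS b = 1 ∨ MlS b = -1 := by
    have hMb : MlS b = P * matS (x + y) := by rw [hb, MlS_cons, hP]
    have t2 : matS (x + y) = -(matS y * matS 0 * matS x) := by
      rw [triple_id, neg_neg]
    rcases hrpm with hg | hg
    · right
      have hQ : P * matS y * matS 0 = matSi x := by
        have := congrArg (fun M => matSi x * M) hg
        simpa [← mul_assoc, matSi_mul_matS] using this
      rw [hMb, t2]
      calc P * -(matS y * matS 0 * matS x)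
          = -(P * matS y * matS 0 * matS x) := by
            simp only [mul_neg, mul_assoc]
        _ = -(matSi x * matS x) := by rw [hQ]
        _ = -1 := by rw [matSi_mul_matS]
    · left
      have hQ : P * matS y * matS 0 = -matSi x := by
        have := congrArg (fun M => matSi x * M) hg
        simpa [← mul_assoc, matSi_mul_matS] using this
      rw [hMb, t2]
      calc P * -(matS y * matS 0 * matS x)
          = -(P * matS y * matS 0 * matS x) := by
            simp only [mul_neg, mul_assoc]
        _ = -(-matSi x * matS x) := by rw [hQ]
        _ = 1 := by simp [matSi_mul_matS]
  -- assemble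
  refine ⟨[0, x, 0, -x], b, ?_, ?_, by simp, ?_, ?_⟩
  · intro z hz
    simp only [List.mem_cons, List.not_mem_nil, or_false] at hz
    rcases hz with rfl | rfl | rfl | rfl
    · exact sg_zero w
    · exact hx_mem
    · exact sg_zero w
    · exact sg_neg w hx_mem
  · refine ⟨by simp [hb], ?_, by rw [← Mlist_eq_MlS] at hbq; exact hbq⟩
    intro z hz
    rw [hb] at hz
    rcases List.mem_cons.mp hz with rfl | hz
    · exact sg_add w hx_mem hy_mem
    · exact hm_mem z hz
  · rw [hb]
    simp only [List.length_cons]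
    omega
  · left
    refine ⟨s.length + ((0 : ℂ) :: y :: md).length, ?_⟩
    have hsplit : (0 : ℂ) :: y :: (m ++ [x]) = ((0 : ℂ) :: y :: md) ++ [lm, x] := by
      rw [hm]; simp
    have h1 : c.rotate (s.length + ((0 : ℂ) :: y :: md).length)
        = [lm, x] ++ ((0 : ℂ) :: y :: md) := by
      rw [← List.rotate_rotate, hd, hsplit, rotate_append]
    have h3 : oplus [0, x, 0, -x] b = lm :: x :: 0 :: y :: md := by
      rw [hb, hm]
      show (0 + ((x+y) :: (md ++ [lm])).getLastD 0) :: _ = _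
      have hlast : ((x + y) :: (md ++ [lm])).getLastD 0 = lm := by
        rw [show (x + y) :: (md ++ [lm]) = ((x + y) :: md) ++ [lm] by simp,
          List.getLastD_concat]
      rw [hlast]
      simp [oplus, List.dropLast_concat]
    rw [h3, h1]
    simp

lemma MlS_form1 (x : ℂ) : MlS [0, x, 0, -x] = 1 := by
  rw [MlS_four, Matrix.one_fin_two]
  ext i j
  fin_cases i <;> fin_cases j <;>
    simp only [Matrix.of_apply, Matrix.cons_val', Matrix.cons_val_zero, Matrix.cons_val_one,
      Matrix.head_cons, Matrix.head_fin_const, Matrix.empty_val', Matrix.cons_val_fin_one] <;>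
  ring

lemma MlS_form2 (x : ℂ) : MlS [x, 0, -x, 0] = 1 := by
  rw [MlS_four, Matrix.one_fin_two]
  ext i j
  fin_cases i <;> fin_cases j <;>
    simp only [Matrix.of_apply, Matrix.cons_val', Matrix.cons_val_zero, Matrix.cons_val_one,
      Matrix.head_cons, Matrix.head_fin_const, Matrix.empty_val', Matrix.cons_val_fin_one] <;>
  ring

lemma not_red_four {w : ℂ} (hw : w = (((1 - Real.sqrt 11) / 2 : ℝ) : ℂ)) {c : List ℂ}
    (hc : c.length = 4) : ¬ ReducibleQuiddity (subgroupGen w) c := by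
  rintro ⟨a, b, hamem, ⟨hbne, hbmem, hbpm⟩, hla, hlb, hce⟩
  have hlen : (oplus a b).length = a.length + b.length - 2 :=
    oplus_length a b (by omega) (by omega)
  have hcl : (oplus a b).length = 4 := by
    rcases hce with ⟨k, hk⟩ | ⟨k, hk⟩
    · rw [hk, List.length_rotate, hc]
    · rw [hk, List.length_rotate, List.length_reverse, hc]
  have hb3 : b.length = 3 := by omega
  obtain ⟨x, y, z, rfl⟩ := List.length_eq_three.mp hb3
  exact no_three hw (hbmem y (by simp)) hbpm

lemma irr_form1 {w : ℂ} (hw : w = (((1 - Real.sqrt 11) / 2 : ℝ) : ℂ)) (k : ℤ) :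
    IrreducibleQuiddity (subgroupGen w) [0, (k : ℂ) * w, 0, -((k : ℂ) * w)] := by
  refine ⟨⟨by simp, ?_, Or.inl ?_⟩, by simp, not_red_four hw (by simp)⟩
  · intro z hz
    simp only [List.mem_cons, List.not_mem_nil, or_false] at hz
    rcases hz with rfl | rfl | rfl | rfl
    · exact sg_zero w
    · exact ⟨k, rfl⟩
    · exact sg_zero w
    · exact sg_neg w ⟨k, rfl⟩
  · exact MlS_form1 ((k : ℂ) * w)

lemma irr_form2 {w : ℂ} (hw : w = (((1 - Real.sqrt 11) / 2 : ℝ) : ℂ)) (k : ℤ) :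
    IrreducibleQuiddity (subgroupGen w) [(k : ℂ) * w, 0, -((k : ℂ) * w), 0] := by
  refine ⟨⟨by simp, ?_, Or.inl ?_⟩, by simp, not_red_four hw (by simp)⟩
  · intro z hz
    simp only [List.mem_cons, List.not_mem_nil, or_false] at hz
    rcases hz with rfl | rfl | rfl | rfl
    · exact ⟨k, rfl⟩
    · exact sg_zero w
    · exact sg_neg w ⟨k, rfl⟩
    · exact sg_zero w
  · exact MlS_form2 ((k : ℂ) * w)

end Aux

theorem stmt8 (w : ℂ) (hw : w = (((1 - Real.sqrt 11) / 2 : ℝ) : ℂ)) :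
    {c : List ℂ | IrreducibleQuiddity (subgroupGen w) c} =
      {c : List ℂ | ∃ k : ℤ, c = [0, (k : ℂ) * w, 0, -((k : ℂ) * w)]} ∪
      {c : List ℂ | ∃ k : ℤ, c = [(k : ℂ) * w, 0, -((k : ℂ) * w), 0]} := by
  ext c
  simp only [Set.mem_setOf_eq, Set.mem_union]
  constructor
  · rintro ⟨⟨hne, hmem, hpm⟩, hlen, hnred⟩
    by_cases h5 : 5 ≤ c.length
    · exfalso
      by_cases h0 : (0 : ℂ) ∈ c
      · exact hnred (zero_imp_reducible w h5 hmem hpm h0)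
      · obtain ⟨ks, rfl⟩ := exists_int_list w c hmem
        refine no_nonzero_quiddity w hw ?_ ?_ hpm
        · intro hk
          apply hne
          rw [hk]
          rfl
        · intro k hk hk0
          apply h0
          refine List.mem_map.mpr ⟨k, hk, ?_⟩
          rw [hk0]
          simp
    · have h34 : c.length = 3 ∨ c.length = 4 := by omega
      rcases h34 with h3 | h4
      · exfalso
        obtain ⟨x, y, z, rfl⟩ := List.length_eq_three.mp h3
        exact no_three hw (hmem y (by simp)) hpm
      · have h4' : ∃ a1 a2 a3 a4, c = [a1, a2, a3, a4] := by
          rcases c with _ | ⟨a1, _ | ⟨a2, _ | ⟨a3, _ | ⟨a4, rest⟩⟩⟩⟩ <;> simp_all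
        obtain ⟨a1, a2, a3, a4, rfl⟩ := h4'
        obtain ⟨k1, e1⟩ := hmem a1 (by simp)
        obtain ⟨k2, e2⟩ := hmem a2 (by simp)
        obtain ⟨k3, e3⟩ := hmem a3 (by simp)
        rcases four_case hw e1 e2 e3 hpm with ⟨h1, h3, h4⟩ | ⟨h2, h4, h3⟩
        · left
          exact ⟨k2, by rw [h1, h3, h4, e2]⟩
        · right
          exact ⟨k1, by rw [h2, h4, h3, e1]⟩
  · rintro (⟨k, rfl⟩ | ⟨k, rfl⟩)
    · exact irr_form1 hw k
    · exact irr_form2 hw k
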